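/- 1D jellium energy as the squared particle-excess function (equation (6.2)): For any N ∈ ℕ and any particle positions 0 < x₁ < ⋯ < x_N < N, Σ_{1≤j<k≤N} V(x_j, x_k) − Σ_{j=1}^N ∫_0^N V(x_j, t) dt + (1/2)·∫_0^N ∫_0^N V(s,t) ds dt = (1/2)·∫_0^N K(t)² dt. -/

import Mathlib

open MeasureTheory Set

section helpers

lemma ind_intble (a : ℝ) (g : ℝ → ℝ) (hg : Continuous g) (b c : ℝ) :
    IntervalIntegrable ((Set.Ici a).indicator g) volume b c := by
  constructor <;> exact (hg.integrableOn_Ioc).indicator measurableSet_Ici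

lemma ind_int (a N : ℝ) (g : ℝ → ℝ) (h0 : 0 < a) (hN : a ≤ N) :
    ∫ t in (0:ℝ)..N, (Set.Ici a).indicator g t = ∫ t in a..N, g t := by
  rw [intervalIntegral.integral_of_le (le_trans h0.le hN), intervalIntegral.integral_of_le hN,
    setIntegral_indicator measurableSet_Ici]
  have : Set.Ioc (0:ℝ) N ∩ Set.Ici a = Set.Icc a N := by
    ext t; simp only [mem_inter_iff, mem_Ioc, mem_Ici, mem_Icc]
    constructor
    · rintro ⟨⟨_, h2⟩, h3⟩; exact ⟨h3, h2⟩
    · rintro ⟨h1, h2⟩; exact ⟨⟨lt_of_lt_of_le h0 h1, h2⟩, h1⟩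
  rw [this, integral_Icc_eq_integral_Ioc]

open intervalIntegral in
lemma poly_int (A B C b : ℝ) : ∫ t in (0:ℝ)..b, (A*t^2 + B*t + C) = A*b^3/3 + B*b^2/2 + C*b := by
  have h1 : IntervalIntegrable (fun t : ℝ => A*t^2) volume 0 b :=
    (continuous_const.mul (continuous_pow 2)).intervalIntegrable _ _
  have h2 : IntervalIntegrable (fun t : ℝ => B*t) volume 0 b :=
    (continuous_const.mul continuous_id).intervalIntegrable _ _
  have h3 : IntervalIntegrable (fun t : ℝ => C) volume 0 b :=
    continuous_const.intervalIntegrable _ _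
  rw [integral_add (h1.add h2) h3, integral_add h1 h2,
    intervalIntegral.integral_const_mul, intervalIntegral.integral_const_mul, integral_pow, integral_id,
    intervalIntegral.integral_const]
  push_cast; simp only [smul_eq_mul]; ring

open intervalIntegral in
lemma abs_int (a b : ℝ) (h0 : 0 ≤ a) (hN : a ≤ b) :
    ∫ t in (0:ℝ)..b, -|a - t| / 2 = -(a^2 + (b-a)^2)/4 := by
  have key : ∫ t in (0:ℝ)..b, |a - t| = a^2/2 + (b-a)^2/2 := by
    have hi1 : IntervalIntegrable (fun t : ℝ => |a - t|) volume 0 a :=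
      ((continuous_const.sub continuous_id).abs).intervalIntegrable _ _
    have hi2 : IntervalIntegrable (fun t : ℝ => |a - t|) volume a b :=
      ((continuous_const.sub continuous_id).abs).intervalIntegrable _ _
    rw [← integral_add_adjacent_intervals hi1 hi2]
    have e1 : ∫ t in (0:ℝ)..a, |a - t| = ∫ t in (0:ℝ)..a, (a - t) := by
      apply integral_congr
      intro t ht
      rw [uIcc_of_le h0, mem_Icc] at ht
      show |a - t| = a - t
      exact abs_of_nonneg (by linarith [ht.2])
    have e2 : ∫ t in a..b, |a - t| = ∫ t in a..b, (t - a) := by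
      apply integral_congr
      intro t ht
      rw [uIcc_of_le hN, mem_Icc] at ht
      show |a - t| = t - a
      rw [abs_sub_comm]
      exact abs_of_nonneg (by linarith [ht.1])
    rw [e1, e2,
      integral_sub (continuous_const.intervalIntegrable _ _)
        (continuous_id'.intervalIntegrable _ _),
      integral_sub (continuous_id'.intervalIntegrable _ _)
        (continuous_const.intervalIntegrable _ _),
      intervalIntegral.integral_const, intervalIntegral.integral_const, integral_id, integral_id]
    simp only [smul_eq_mul]; ring
  have : (fun t : ℝ => -|a - t| / 2) = fun t => (-(1:ℝ)/2) * |a - t| := by funext t; ring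
  rw [this, intervalIntegral.integral_const_mul, key]; ring

lemma card_eq {N : ℕ} (x : Fin N → ℝ) (t : ℝ) :
    ((Nat.card {j : Fin N // x j ≤ t}) : ℝ)
      = ∑ j, (Set.Ici (x j)).indicator (fun _ => (1:ℝ)) t := by
  classical
  rw [Nat.card_eq_fintype_card, Fintype.card_subtype, Finset.card_filter]
  push_cast
  refine Finset.sum_congr rfl fun j _ => ?_
  by_cases h : x j ≤ t <;> simp [Set.indicator_apply, Set.mem_Ici, h]

lemma sum_TU {N : ℕ} (x : Fin N → ℝ) :
    (∑ j : Fin N, ∑ k : Fin N, if j < k then x j else 0)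
      + (∑ j : Fin N, ∑ k : Fin N, if j < k then x k else 0)
    = ((N:ℝ) - 1) * ∑ j, x j := by
  have swap : (∑ j : Fin N, ∑ k : Fin N, if j < k then x k else 0)
      = ∑ j : Fin N, ∑ k : Fin N, if k < j then x j else 0 := Finset.sum_comm
  rw [swap, ← Finset.sum_add_distrib]
  have : ∀ j : Fin N, ((∑ k : Fin N, if j < k then x j else 0)
      + ∑ k : Fin N, if k < j then x j else 0) = ((N:ℝ) - 1) * x j := by
    intro j
    rw [← Finset.sum_add_distrib]
    have e : ∀ k : Fin N, ((if j < k then x j else 0) + if k < j then x j else 0)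
        = x j - (if k = j then x j else 0) := by
      intro k
      rcases lt_trichotomy j k with h | h | h
      · simp [h, not_lt_of_gt h, Ne.symm (ne_of_lt h), (ne_of_lt h)]
      · simp [h, lt_irrefl]
      · simp [h, not_lt_of_gt h, ne_of_lt h, (ne_of_lt h).symm]
    rw [Finset.sum_congr rfl fun k _ => e k, Finset.sum_sub_distrib,
      Finset.sum_const, Finset.sum_ite_eq' Finset.univ j (fun _ => x j)]
    simp [Finset.card_univ, mul_comm]
    ring
  rw [Finset.sum_congr rfl fun j _ => this j, ← Finset.mul_sum]

lemma sum_max {N : ℕ} (x : Fin N → ℝ) (hx : StrictMono x) :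
    (∑ j : Fin N, ∑ k : Fin N, max (x j) (x k))
    = (∑ j, x j) + 2 * ∑ j : Fin N, ∑ k : Fin N, (if j < k then x k else 0) := by
  have e : ∀ j k : Fin N, max (x j) (x k)
      = (if j < k then x k else 0) + (if k < j then x j else 0)
        + (if k = j then x j else 0) := by
    intro j k
    rcases lt_trichotomy j k with h | h | h
    · simp [h, not_lt_of_gt h, ne_of_gt, (ne_of_lt h), Ne.symm (ne_of_lt h),
        max_eq_right (hx h).le]
    · simp [h, lt_irrefl]
    · simp [h, not_lt_of_gt h, (ne_of_lt h), max_eq_left (hx h).le]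
  rw [Finset.sum_congr rfl fun j _ => Finset.sum_congr rfl fun k _ => e j k]
  simp only [Finset.sum_add_distrib]
  have swap : (∑ j : Fin N, ∑ k : Fin N, if k < j then x j else 0)
      = ∑ j : Fin N, ∑ k : Fin N, if j < k then x k else 0 := Finset.sum_comm
  have diag : (∑ j : Fin N, ∑ k : Fin N, if k = j then x j else 0) = ∑ j, x j := by
    refine Finset.sum_congr rfl fun j _ => ?_
    exact Finset.sum_ite_eq' Finset.univ j (fun _ => x j) |>.trans (by simp)
  rw [swap, diag]; ring

open intervalIntegral in
lemma sq_int (b : ℝ) : ∫ t in (0:ℝ)..b, t^2 = b^3/3 := by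
  rw [integral_pow]; norm_num

open intervalIntegral in
lemma id_int (a b : ℝ) : ∫ t in a..b, t = (b^2 - a^2)/2 := integral_id

end helpers

theorem oneD_jellium_energy (N : ℕ) (x : Fin N → ℝ) (hx : StrictMono x)
    (hx0 : ∀ j, 0 < x j) (hxN : ∀ j, x j < (N : ℝ)) :
    (∑ j : Fin N, ∑ k : Fin N, if j < k then -|x j - x k| / 2 else 0)
      - (∑ j : Fin N, ∫ t in (0:ℝ)..(N:ℝ), -|x j - t| / 2)
      + (1 / 2) * ∫ s in (0:ℝ)..(N:ℝ), ∫ t in (0:ℝ)..(N:ℝ), -|s - t| / 2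
    = (1 / 2) * ∫ t in (0:ℝ)..(N:ℝ),
        (t - (Nat.card {j : Fin N // x j ≤ t} : ℝ)) ^ 2 := by
  classical
  have h0N : (0:ℝ) ≤ (N:ℝ) := Nat.cast_nonneg N
  -- particle-particle
  have hPP : (∑ j : Fin N, ∑ k : Fin N, if j < k then -|x j - x k| / 2 else 0)
      = ∑ j : Fin N, ∑ k : Fin N,
          ((if j < k then x j else 0) - (if j < k then x k else 0)) / 2 := by
    refine Finset.sum_congr rfl fun j _ => Finset.sum_congr rfl fun k _ => ?_
    by_cases h : j < k
    · rw [if_pos h, if_pos h, if_pos h, abs_of_neg (sub_neg.mpr (hx h))]; ring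
    · simp [h]
  -- particle-background
  have hPB : (∑ j : Fin N, ∫ t in (0:ℝ)..(N:ℝ), -|x j - t| / 2)
      = ∑ j : Fin N, (-((x j)^2 + ((N:ℝ) - x j)^2)/4) :=
    Finset.sum_congr rfl fun j _ => abs_int _ _ (hx0 j).le (hxN j).le
  -- background-background
  have hBB : (∫ s in (0:ℝ)..(N:ℝ), ∫ t in (0:ℝ)..(N:ℝ), -|s - t| / 2) = -(N:ℝ)^3/6 := by
    have e : (∫ s in (0:ℝ)..(N:ℝ), ∫ t in (0:ℝ)..(N:ℝ), -|s - t| / 2)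
        = ∫ s in (0:ℝ)..(N:ℝ), ((-(1:ℝ)/2)*s^2 + ((N:ℝ)/2)*s + (-(N:ℝ)^2/4)) := by
      apply intervalIntegral.integral_congr
      intro s hs
      rw [uIcc_of_le h0N, mem_Icc] at hs
      show (∫ t in (0:ℝ)..(N:ℝ), -|s - t| / 2) = _
      rw [abs_int s (N:ℝ) hs.1 hs.2]; ring
    rw [e, poly_int]; ring
  -- the squared-K integrand
  have hK : ∀ t : ℝ, (t - (Nat.card {j : Fin N // x j ≤ t} : ℝ)) ^ 2
      = t^2 - (∑ j : Fin N, (Ici (x j)).indicator (fun s => 2*s) t)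
        + ∑ j : Fin N, ∑ k : Fin N, (Ici (max (x j) (x k))).indicator (fun _ => (1:ℝ)) t := by
    intro t
    rw [card_eq]
    have h1 : (∑ j : Fin N, (Ici (x j)).indicator (fun s => 2*s) t)
        = 2 * t * ∑ j : Fin N, (Ici (x j)).indicator (fun _ => (1:ℝ)) t := by
      rw [Finset.mul_sum]
      refine Finset.sum_congr rfl fun j _ => ?_
      by_cases h : x j ≤ t <;> simp [Set.indicator_apply, Set.mem_Ici, h]
    have h2 : (∑ j : Fin N, ∑ k : Fin N, (Ici (max (x j) (x k))).indicator (fun _ => (1:ℝ)) t)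
        = (∑ j : Fin N, (Ici (x j)).indicator (fun _ => (1:ℝ)) t)
          * (∑ k : Fin N, (Ici (x k)).indicator (fun _ => (1:ℝ)) t) := by
      rw [Finset.sum_mul_sum]
      refine Finset.sum_congr rfl fun j _ => Finset.sum_congr rfl fun k _ => ?_
      by_cases hj : x j ≤ t <;> by_cases hk : x k ≤ t <;>
        simp [Set.indicator_apply, Set.mem_Ici, hj, hk, max_le_iff]
    rw [h1, h2]; ring
  -- the RHS integral
  have hRHS : (∫ t in (0:ℝ)..(N:ℝ), (t - (Nat.card {j : Fin N // x j ≤ t} : ℝ)) ^ 2)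
      = (N:ℝ)^3/3 - (∑ j : Fin N, ((N:ℝ)^2 - (x j)^2))
        + ∑ j : Fin N, ∑ k : Fin N, ((N:ℝ) - max (x j) (x k)) := by
    rw [intervalIntegral.integral_congr (g := fun t =>
      t^2 - (∑ j : Fin N, (Ici (x j)).indicator (fun s => 2*s) t)
        + ∑ j : Fin N, ∑ k : Fin N, (Ici (max (x j) (x k))).indicator (fun _ => (1:ℝ)) t)
      (fun t _ => hK t)]
    have i1 : IntervalIntegrable (fun t : ℝ => t^2) volume 0 (N:ℝ) :=
      (continuous_pow 2).intervalIntegrable _ _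
    have i2 : IntervalIntegrable
        (fun t => ∑ j : Fin N, (Ici (x j)).indicator (fun s => 2*s) t) volume 0 (N:ℝ) := by
      rw [← Finset.sum_fn]
      exact IntervalIntegrable.sum _ fun j _ =>
        ind_intble _ _ (continuous_const.mul continuous_id') _ _
    have i3 : IntervalIntegrable
        (fun t => ∑ j : Fin N, ∑ k : Fin N,
          (Ici (max (x j) (x k))).indicator (fun _ => (1:ℝ)) t) volume 0 (N:ℝ) := by
      rw [← Finset.sum_fn]
      refine IntervalIntegrable.sum _ fun j _ => ?_
      rw [← Finset.sum_fn]
      exact IntervalIntegrable.sum _ fun k _ => ind_intble _ _ continuous_const _ _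
    rw [intervalIntegral.integral_add (i1.sub i2) i3, intervalIntegral.integral_sub i1 i2,
      intervalIntegral.integral_finset_sum (fun j _ =>
        ind_intble _ (fun s => 2*s) (continuous_const.mul continuous_id') _ _),
      intervalIntegral.integral_finset_sum (fun j _ => by
        rw [← Finset.sum_fn]
        exact IntervalIntegrable.sum _ fun k _ => ind_intble _ _ continuous_const _ _)]
    have e1 : (∫ t in (0:ℝ)..(N:ℝ), t^2) = (N:ℝ)^3/3 := sq_int _
    have e2 : ∀ j : Fin N, (∫ t in (0:ℝ)..(N:ℝ), (Ici (x j)).indicator (fun s => 2*s) t)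
        = (N:ℝ)^2 - (x j)^2 := by
      intro j
      rw [ind_int _ _ _ (hx0 j) (hxN j).le]
      rw [intervalIntegral.integral_const_mul, id_int]
      ring
    have e3 : ∀ j k : Fin N,
        (∫ t in (0:ℝ)..(N:ℝ), (Ici (max (x j) (x k))).indicator (fun _ => (1:ℝ)) t)
        = (N:ℝ) - max (x j) (x k) := by
      intro j k
      rw [ind_int _ _ _ (lt_max_of_lt_left (hx0 j)) (max_le (hxN j).le (hxN k).le),
        intervalIntegral.integral_const]
      simp
    rw [e1, Finset.sum_congr rfl fun j _ => e2 j]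
    congr 1
    refine Finset.sum_congr rfl fun j _ => ?_
    rw [intervalIntegral.integral_finset_sum (fun k _ => ind_intble _ _ continuous_const _ _)]
    exact Finset.sum_congr rfl fun k _ => e3 j k
  -- assemble
  rw [hPP, hPB, hBB, hRHS]
  -- reduce to scalar identities
  have split1 : (∑ j : Fin N, ∑ k : Fin N,
      ((if j < k then x j else 0) - (if j < k then x k else 0)) / 2)
      = ((∑ j : Fin N, ∑ k : Fin N, if j < k then x j else 0)
        - (∑ j : Fin N, ∑ k : Fin N, if j < k then x k else 0)) / 2 := by
    simp only [← Finset.sum_div, Finset.sum_sub_distrib]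
  have split2 : (∑ j : Fin N, (-((x j)^2 + ((N:ℝ) - x j)^2)/4))
      = -((∑ j : Fin N, (x j)^2) + ((N:ℝ)*(N:ℝ)^2 - 2*(N:ℝ)*(∑ j : Fin N, x j)
          + (∑ j : Fin N, (x j)^2)))/4 := by
    have : ∀ j : Fin N, (-((x j)^2 + ((N:ℝ) - x j)^2)/4)
        = (-1/2)*(x j)^2 + ((N:ℝ)/2)*(x j) + (-(N:ℝ)^2/4) := fun j => by ring
    rw [Finset.sum_congr rfl fun j _ => this j, Finset.sum_add_distrib,
      Finset.sum_add_distrib, ← Finset.mul_sum, ← Finset.mul_sum,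
      Finset.sum_const, Finset.card_univ, Fintype.card_fin, nsmul_eq_mul]
    try ring
  have split3 : (∑ j : Fin N, ((N:ℝ)^2 - (x j)^2))
      = (N:ℝ)*(N:ℝ)^2 - ∑ j : Fin N, (x j)^2 := by
    rw [Finset.sum_sub_distrib, Finset.sum_const, Finset.card_univ, Fintype.card_fin,
      nsmul_eq_mul]
    try ring
  have split4 : (∑ j : Fin N, ∑ k : Fin N, ((N:ℝ) - max (x j) (x k)))
      = (N:ℝ)*(N:ℝ)*(N:ℝ) - ∑ j : Fin N, ∑ k : Fin N, max (x j) (x k) := by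
    have : ∀ j : Fin N, (∑ k : Fin N, ((N:ℝ) - max (x j) (x k)))
        = (N:ℝ)*(N:ℝ) - ∑ k : Fin N, max (x j) (x k) := by
      intro j
      rw [Finset.sum_sub_distrib, Finset.sum_const, Finset.card_univ, Fintype.card_fin,
        nsmul_eq_mul]
    rw [Finset.sum_congr rfl fun j _ => this j, Finset.sum_sub_distrib, Finset.sum_const,
      Finset.card_univ, Fintype.card_fin, nsmul_eq_mul]
    ring
  rw [split1, split2, split3, split4, sum_max x hx]
  have hTU := sum_TU x
  linear_combination (1/2) * hTU
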